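/- Let f : ℂ → ℂ be continuously differentiable (as a function of two real variables) with compact support. Define the d-bar operator by (∂̄f)(w) = (1/2)( D f(w)[1] + i · D f(w)[i] ), where D f(w)[v] is the real Fréchet derivative of f at w in direction v ∈ ℂ. Then for every z ∈ ℂ, f(z) = (1/π) ∫_ℂ (∂̄f)(w) / (z − w) dA(w), where dA is two-dimensional Lebesgue measure on ℂ. -/

import Mathlib

open MeasureTheory Real

/-- The d-bar operator `∂̄f = (1/2)(∂ₓf + i ∂_y f)`, expressed via the real Fréchet
derivative: `(∂̄f)(w) = (1/2)(Df(w)[1] + i·Df(w)[i])`. -/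
noncomputable def dbar (f : ℂ → ℂ) (w : ℂ) : ℂ :=
  (1 / 2) * (fderiv ℝ f w 1 + Complex.I * fderiv ℝ f w Complex.I)

namespace CPAux

open Set Filter

noncomputable def cis (θ : ℝ) : ℂ := Complex.exp (θ * Complex.I)

lemma cis_ne_zero (θ : ℝ) : cis θ ≠ 0 := Complex.exp_ne_zero _

lemma cis_eq (θ : ℝ) : cis θ = (Real.cos θ : ℂ) + (Real.sin θ : ℂ) * Complex.I := by
  rw [cis, Complex.exp_mul_I]
  simp [← Complex.ofReal_cos, ← Complex.ofReal_sin]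

lemma abs_cis (θ : ℝ) : ‖cis θ‖ = 1 := Complex.norm_exp_ofReal_mul_I θ

lemma continuous_cis : Continuous cis :=
  (Complex.continuous_ofReal.mul continuous_const).cexp

lemma hasDerivAt_cis (θ : ℝ) : HasDerivAt cis (cis θ * Complex.I) θ := by
  have h : HasDerivAt (fun θ : ℝ => (θ : ℂ) * Complex.I) Complex.I θ := by
    simpa using (Complex.ofRealCLM.hasDerivAt (x := θ)).mul_const Complex.I
  exact h.cexp

lemma clm_real_mul (L : ℂ →L[ℝ] ℂ) (r : ℝ) (x : ℂ) :
    L ((r : ℂ) * x) = (r : ℂ) * L x := by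
  rw [← Complex.real_smul, L.map_smul, Complex.real_smul]

lemma clm_apply_real (L : ℂ →L[ℝ] ℂ) (a b : ℝ) :
    L ((a : ℂ) + (b : ℂ) * Complex.I) =
      (a : ℂ) * L 1 + (b : ℂ) * L Complex.I := by
  rw [map_add, ← mul_one (a : ℂ), clm_real_mul, clm_real_mul, mul_one]

lemma key (L : ℂ →L[ℝ] ℂ) (θ : ℝ) :
    (1 / 2 : ℂ) * (L 1 + Complex.I * L Complex.I) / cis θ
      = (1 / 2 : ℂ) * L (cis θ) + (1 / 2 : ℂ) * Complex.I * L (Complex.I * cis θ) := by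
  have hcs : (Real.cos θ : ℂ) ^ 2 + (Real.sin θ : ℂ) ^ 2 = 1 := by
    exact_mod_cast Real.cos_sq_add_sin_sq θ
  have h1 : Complex.I * cis θ = ((-Real.sin θ : ℝ) : ℂ) + (Real.cos θ : ℂ) * Complex.I := by
    rw [cis_eq]; push_cast; ring_nf; rw [Complex.I_sq]; ring
  rw [div_eq_iff (cis_ne_zero θ), h1, clm_apply_real, cis_eq, clm_apply_real,
    Complex.ofReal_neg]
  linear_combination (-(1/2 : ℂ) * (L 1 + Complex.I * L Complex.I)) * hcs +
    ((1/2 : ℂ) * (Real.sin θ : ℂ) * ((Real.sin θ : ℂ) * L 1 - (Real.cos θ : ℂ) * L Complex.I)) *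
      Complex.I_sq

variable {f : ℂ → ℂ}

lemma hasDerivAt_r (hf : ContDiff ℝ 1 f) (z : ℂ) (θ : ℝ) (r : ℝ) :
    HasDerivAt (fun r : ℝ => f (z - r * cis θ))
      (-(fderiv ℝ f (z - r * cis θ) (cis θ))) r := by
  have h1 : HasDerivAt (fun r : ℝ => z - r * cis θ) (-(cis θ)) r := by
    simpa using ((Complex.ofRealCLM.hasDerivAt (x := r)).mul_const (cis θ)).const_sub z
  have h2 := ((hf.differentiable one_ne_zero) (z - r * cis θ)).hasFDerivAt
  have h3 := h2.comp_hasDerivAt r h1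
  rw [map_neg] at h3
  exact h3

lemma hasDerivAt_theta (hf : ContDiff ℝ 1 f) (z : ℂ) (r : ℝ) (θ : ℝ) :
    HasDerivAt (fun θ : ℝ => f (z - r * cis θ))
      (-((r : ℂ) * fderiv ℝ f (z - r * cis θ) (Complex.I * cis θ))) θ := by
  have h1 : HasDerivAt (fun θ : ℝ => z - r * cis θ) (-((r : ℂ) * (cis θ * Complex.I))) θ :=
    ((hasDerivAt_cis θ).const_mul ((r : ℂ))).const_sub z
  have h2 := ((hf.differentiable one_ne_zero) (z - r * cis θ)).hasFDerivAt
  have h3 := h2.comp_hasDerivAt θ h1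
  have h4 : (fderiv ℝ f (z - r * cis θ)) (-((r : ℂ) * (cis θ * Complex.I)))
      = -((r : ℂ) * fderiv ℝ f (z - r * cis θ) (Complex.I * cis θ)) := by
    rw [map_neg, clm_real_mul, mul_comm (cis θ)]
  rw [h4] at h3
  exact h3

lemma integrableOn_Ioi_of_zero {g : ℝ → ℂ} (hg : Continuous g) (R : ℝ) (hR : 0 < R)
    (h0 : ∀ r : ℝ, R ≤ r → g r = 0) : IntegrableOn g (Ioi (0 : ℝ)) := by
  rw [← Ioc_union_Ioi_eq_Ioi hR.le, integrableOn_union]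
  constructor
  · exact (hg.continuousOn.integrableOn_compact isCompact_Icc).mono_set Ioc_subset_Icc_self
  · exact (integrableOn_zero (ε' := ℂ)).congr_fun (fun r hr => (h0 r (le_of_lt hr)).symm)
      measurableSet_Ioi

lemma integrableOn_prod_of_zero {g : ℝ × ℝ → ℂ} (hg : Continuous g) (R : ℝ) (hR : 0 < R)
    (h0 : ∀ p : ℝ × ℝ, R ≤ p.1 → g p = 0) :
    IntegrableOn g (Ioi (0 : ℝ) ×ˢ Ioo (-π) π) := by
  rw [← Ioc_union_Ioi_eq_Ioi hR.le, Set.union_prod, integrableOn_union]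
  constructor
  · exact ((hg.continuousOn.integrableOn_compact (isCompact_Icc.prod isCompact_Icc)).mono_set
      (Set.prod_mono Ioc_subset_Icc_self Ioo_subset_Icc_self))
  · exact (integrableOn_zero (ε' := ℂ)).congr_fun (fun p hp => (h0 p (le_of_lt hp.1)).symm)
      (measurableSet_Ioi.prod measurableSet_Ioo)

/-- The integrand `A` in the radial direction. -/
noncomputable def Afun (f : ℂ → ℂ) (z : ℂ) (p : ℝ × ℝ) : ℂ :=
  (1 / 2 : ℂ) * fderiv ℝ f (z - p.1 * cis p.2) (cis p.2)

/-- The integrand `B` in the angular direction. -/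
noncomputable def Bfun (f : ℂ → ℂ) (z : ℂ) (p : ℝ × ℝ) : ℂ :=
  (1 / 2 : ℂ) * Complex.I * fderiv ℝ f (z - p.1 * cis p.2) (Complex.I * cis p.2)

lemma continuous_inner (hf : ContDiff ℝ 1 f) (z : ℂ) :
    Continuous fun p : ℝ × ℝ => fderiv ℝ f (z - p.1 * cis p.2) :=
  (hf.continuous_fderiv one_ne_zero).comp (continuous_const.sub
    ((Complex.continuous_ofReal.comp continuous_fst).mul (continuous_cis.comp continuous_snd)))

lemma continuous_Afun (hf : ContDiff ℝ 1 f) (z : ℂ) : Continuous (Afun f z) :=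
  continuous_const.mul ((continuous_inner hf z).clm_apply (continuous_cis.comp continuous_snd))

lemma continuous_Bfun (hf : ContDiff ℝ 1 f) (z : ℂ) : Continuous (Bfun f z) :=
  continuous_const.mul ((continuous_inner hf z).clm_apply
    (continuous_const.mul (continuous_cis.comp continuous_snd)))

end CPAux

open CPAux Set Filter Topology

/-- Area Cauchy–Pompeiu formula: for `f ∈ C¹_c(ℂ)`,
`f(z) = (1/π) ∫_ℂ (∂̄f)(w)/(z - w) dA(w)`, i.e. `1/(πk)` is the fundamental solution
of the d-bar operator. -/
theorem cauchy_pompeiu_area (f : ℂ → ℂ) (hf : ContDiff ℝ 1 f)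
    (hsupp : HasCompactSupport f) (z : ℂ) :
    f z = ((π : ℂ))⁻¹ * ∫ w : ℂ, dbar f w / (z - w) := by
  -- support bound
  obtain ⟨R₀, hR₀pos, hR₀⟩ := hsupp.isBounded.subset_closedBall_lt 0 0
  set R : ℝ := ‖z‖ + R₀ + 1 with hRdef
  have hRpos : 0 < R := by positivity
  have habs : ∀ p : ℝ × ℝ, R ≤ p.1 → z - (p.1 : ℂ) * cis p.2 ∉ Metric.closedBall (0 : ℂ) R₀ := by
    rintro ⟨r, θ⟩ hp hmem
    simp only at hp
    rw [Metric.mem_closedBall, dist_zero_right] at hmem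
    have h1 : ‖(r : ℂ) * cis θ‖ = r := by
      rw [norm_mul, Complex.norm_real, abs_cis, mul_one,
        Real.norm_eq_abs, abs_of_pos (lt_of_lt_of_le hRpos hp)]
    have h2 : ‖(r : ℂ) * cis θ‖ - ‖z‖ ≤ ‖(r : ℂ) * cis θ - z‖ := by
      have := norm_sub_norm_le ((r : ℂ) * cis θ) z
      linarith
    rw [norm_sub_rev] at h2
    have h3 : ‖z‖ = ‖z‖ := rfl
    simp only at hmem ⊢
    rw [h1, h3] at h2
    have : (R : ℝ) ≤ r := hp
    linarith
  have hdzero : ∀ p : ℝ × ℝ, R ≤ p.1 → fderiv ℝ f (z - (p.1 : ℂ) * cis p.2) = 0 := by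
    intro p hp
    by_contra h
    exact habs p hp (hR₀ (tsupport_fderiv_subset ℝ (subset_closure (Function.mem_support.2 h))))
  have hfzero : ∀ p : ℝ × ℝ, R ≤ p.1 → f (z - (p.1 : ℂ) * cis p.2) = 0 := by
    intro p hp
    by_contra h
    exact habs p hp (hR₀ (subset_closure (Function.mem_support.2 h)))
  -- integrability of the two pieces
  have hIntA : IntegrableOn (Afun f z) (Ioi (0 : ℝ) ×ˢ Ioo (-π) π) :=
    integrableOn_prod_of_zero (continuous_Afun hf z) R hRpos
      (fun p hp => by simp [Afun, hdzero p hp])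
  have hIntB : IntegrableOn (Bfun f z) (Ioi (0 : ℝ) ×ˢ Ioo (-π) π) :=
    integrableOn_prod_of_zero (continuous_Bfun hf z) R hRpos
      (fun p hp => by simp [Bfun, hdzero p hp])
  -- the main computation
  have hmain : ∫ w : ℂ, dbar f w / (z - w) = (π : ℂ) * f z := by
    have step1 : ∫ w : ℂ, dbar f w / (z - w) = ∫ w : ℂ, dbar f (z - w) / w := by
      have h := integral_sub_left_eq_self (fun w : ℂ => dbar f (z - w) / w) volume z
      simp only [sub_sub_cancel] at h
      exact h
    have step2 : ∫ w : ℂ, dbar f (z - w) / w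
        = ∫ p in Ioi (0 : ℝ) ×ˢ Ioo (-π) π,
            (Afun f z p + Bfun f z p) := by
      rw [← Complex.integral_comp_polarCoord_symm (fun w => dbar f (z - w) / w),
        polarCoord_target]
      apply setIntegral_congr_fun (measurableSet_Ioi.prod measurableSet_Ioo)
      rintro ⟨r, θ⟩ ⟨hr, hθ⟩
      have hr' : (0 : ℝ) < r := hr
      have hsymm : Complex.polarCoord.symm (r, θ) = (r : ℂ) * cis θ := by
        rw [Complex.polarCoord_symm_apply, cis_eq]
      simp only [hsymm]
      have hr0 : (r : ℂ) ≠ 0 := Complex.ofReal_ne_zero.mpr (ne_of_gt hr')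
      have hsm : (r : ℝ) • (dbar f (z - (r : ℂ) * cis θ) / ((r : ℂ) * cis θ))
          = dbar f (z - (r : ℂ) * cis θ) / cis θ := by
        rw [Complex.real_smul, mul_div_assoc']
        exact mul_div_mul_left _ _ hr0
      rw [hsm, dbar, key (fderiv ℝ f (z - (r : ℂ) * cis θ)) θ]
      rfl
    have step3 : ∫ p in Ioi (0 : ℝ) ×ˢ Ioo (-π) π, (Afun f z p + Bfun f z p)
        = (∫ p in Ioi (0 : ℝ) ×ˢ Ioo (-π) π, Afun f z p)
          + ∫ p in Ioi (0 : ℝ) ×ˢ Ioo (-π) π, Bfun f z p :=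
      integral_add hIntA hIntB
    -- the A part
    have hinner : ∀ θ : ℝ, (∫ r in Ioi (0 : ℝ), Afun f z (r, θ)) = (1 / 2 : ℂ) * f z := by
      intro θ
      have hderiv : ∀ r ∈ Ici (0 : ℝ), HasDerivAt (fun r : ℝ => f (z - r * cis θ))
          (-(fderiv ℝ f (z - r * cis θ) (cis θ))) r := fun r _ => hasDerivAt_r hf z θ r
      have hint : IntegrableOn (fun r : ℝ => -(fderiv ℝ f (z - r * cis θ) (cis θ)))
          (Ioi (0 : ℝ)) := by
        apply integrableOn_Ioi_of_zero _ R hRpos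
        · intro r hr
          rw [show z - (r : ℂ) * cis θ = z - ((r, θ) : ℝ × ℝ).1 * cis ((r, θ) : ℝ × ℝ).2 from rfl,
            hdzero (r, θ) hr]
          simp
        · exact (((hf.continuous_fderiv one_ne_zero).comp (continuous_const.sub
            (Complex.continuous_ofReal.mul continuous_const))).clm_apply continuous_const).neg
      have htend : Tendsto (fun r : ℝ => f (z - r * cis θ)) atTop (𝓝 0) := by
        refine tendsto_const_nhds.congr' ?_
        filter_upwards [eventually_ge_atTop R] with r hr
        exact (hfzero (r, θ) hr).symm
      have hFTC := integral_Ioi_of_hasDerivAt_of_tendsto' hderiv hint htend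
      have h0 : f (z - ((0 : ℝ) : ℂ) * cis θ) = f z := by norm_num
      calc ∫ r in Ioi (0 : ℝ), Afun f z (r, θ)
          = ∫ r in Ioi (0 : ℝ), (-(1 / 2 : ℂ)) * (-(fderiv ℝ f (z - r * cis θ) (cis θ))) := by
            apply setIntegral_congr_fun measurableSet_Ioi (fun r _ => ?_)
            simp [Afun]
        _ = (-(1 / 2 : ℂ)) * ∫ r in Ioi (0 : ℝ), -(fderiv ℝ f (z - r * cis θ) (cis θ)) :=
            integral_const_mul _ _
        _ = (-(1 / 2 : ℂ)) * (0 - f z) := by rw [hFTC, h0]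
        _ = (1 / 2 : ℂ) * f z := by ring
    have hA : (∫ p in Ioi (0 : ℝ) ×ˢ Ioo (-π) π, Afun f z p) = (π : ℂ) * f z := by
      rw [Measure.volume_eq_prod, ← Measure.prod_restrict]
      have hIntA' : Integrable (Afun f z)
          ((volume.restrict (Ioi (0 : ℝ))).prod (volume.restrict (Ioo (-π) π))) := by
        rw [Measure.prod_restrict, ← Measure.volume_eq_prod]; exact hIntA
      rw [integral_prod_symm _ hIntA']
      simp only [hinner]
      rw [setIntegral_const, Real.volume_real_Ioo_of_le (by linarith [pi_pos]),
        Complex.real_smul]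
      push_cast
      ring
    -- the B part
    have hB : (∫ p in Ioi (0 : ℝ) ×ˢ Ioo (-π) π, Bfun f z p) = 0 := by
      rw [Measure.volume_eq_prod, ← Measure.prod_restrict]
      have hIntB' : Integrable (Bfun f z)
          ((volume.restrict (Ioi (0 : ℝ))).prod (volume.restrict (Ioo (-π) π))) := by
        rw [Measure.prod_restrict, ← Measure.volume_eq_prod]; exact hIntB
      rw [integral_prod _ hIntB']
      have hz0 : ∀ r ∈ Ioi (0 : ℝ), (∫ θ in Ioo (-π) π, Bfun f z (r, θ)) = 0 := by
        intro r hr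
        have hr0 : (r : ℂ) ≠ 0 := Complex.ofReal_ne_zero.mpr (ne_of_gt hr)
        have hc : ∀ θ : ℝ, Bfun f z (r, θ)
            = (-(Complex.I / (2 * (r : ℂ))))
              * (-((r : ℂ) * fderiv ℝ f (z - r * cis θ) (Complex.I * cis θ))) := by
          intro θ
          simp only [Bfun]
          field_simp
        rw [setIntegral_congr_fun measurableSet_Ioo (fun θ _ => hc θ), integral_const_mul]
        have hcont : Continuous (fun θ : ℝ =>
            -((r : ℂ) * fderiv ℝ f (z - r * cis θ) (Complex.I * cis θ))) := by
          apply Continuous.neg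
          apply continuous_const.mul
          exact ((hf.continuous_fderiv one_ne_zero).comp (continuous_const.sub
            (continuous_const.mul continuous_cis))).clm_apply
            (continuous_const.mul continuous_cis)
        have hIoo : (∫ θ in Ioo (-π) π,
            -((r : ℂ) * fderiv ℝ f (z - r * cis θ) (Complex.I * cis θ))) = 0 := by
          rw [← integral_Ioc_eq_integral_Ioo,
            ← intervalIntegral.integral_of_le (by linarith [pi_pos] : -π ≤ π),
            intervalIntegral.integral_eq_sub_of_hasDerivAt
              (fun θ _ => hasDerivAt_theta hf z r θ) (hcont.intervalIntegrable _ _)]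
          have hpi : cis π = -1 := Complex.exp_pi_mul_I
          have hnpi : cis (-π) = -1 := by
            rw [cis]
            push_cast
            rw [neg_mul, Complex.exp_neg, Complex.exp_pi_mul_I]
            norm_num
          rw [hpi, hnpi, sub_self]
        rw [hIoo, mul_zero]
      calc (∫ r in Ioi (0 : ℝ), ∫ θ in Ioo (-π) π, Bfun f z (r, θ))
          = ∫ _r in Ioi (0 : ℝ), (0 : ℂ) := setIntegral_congr_fun measurableSet_Ioi hz0
        _ = 0 := integral_zero _ _
    rw [step1, step2, step3, hA, hB, add_zero]
  rw [hmain, ← mul_assoc, inv_mul_cancel₀ (by exact_mod_cast Real.pi_ne_zero), one_mul]
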